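/- Let n ≥ 2 and 1 ≤ r ≤ n−1. For every λ ∈ Γ_r one has H₁(λ)·H_r(λ) ≥ H_{r+1}(λ). -/

import Mathlib

/-- The `k`-th elementary symmetric function of `l = (l 0, …, l (n-1)) ∈ ℝⁿ`. -/
noncomputable def esymm (n k : ℕ) (l : Fin n → ℝ) : ℝ :=
  ∑ s ∈ Finset.powersetCard k (Finset.univ : Finset (Fin n)), ∏ i ∈ s, l i

/-- The normalized `k`-th mean curvature function `H_k(λ) = σ_k(λ) / C(n,k)`. -/
noncomputable def meanH (n k : ℕ) (l : Fin n → ℝ) : ℝ :=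
  esymm n k l / (n.choose k : ℝ)

/-- The Gårding cone `Γ_k ⊆ ℝⁿ`: the connected component of `{λ : σ_k(λ) > 0}`
containing the vector `(1,…,1)`. -/
noncomputable def gardingCone (n k : ℕ) : Set (Fin n → ℝ) :=
  connectedComponentIn {l : Fin n → ℝ | 0 < esymm n k l} (fun _ => 1)


namespace MeanHAux

open Multiset Polynomial

lemma mesymm_zero (s : Multiset ℝ) : s.esymm 0 = 1 := by
  simp [Multiset.esymm, Multiset.powersetCard_zero_left]

lemma mesymm_one (s : Multiset ℝ) : s.esymm 1 = s.sum := by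
  simp [Multiset.esymm, Multiset.powersetCard_one, Multiset.map_map, Function.comp_def]

lemma mesymm_cons (a : ℝ) (s : Multiset ℝ) (k : ℕ) :
    (a ::ₘ s).esymm (k + 1) = s.esymm (k + 1) + a * s.esymm k := by
  rw [Multiset.esymm, Multiset.powersetCard_cons, Multiset.map_add, Multiset.sum_add,
    Multiset.map_map, Multiset.esymm]
  congr 1
  rw [Multiset.esymm, ← Multiset.sum_map_mul_left]
  congr 1
  exact Multiset.map_congr rfl fun x _ => by simp [Multiset.prod_cons]


lemma mesymm_of_lt {s : Multiset ℝ} {k : ℕ} (h : Multiset.card s < k) : s.esymm k = 0 := by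
  simp [Multiset.esymm, Multiset.powersetCard_eq_empty _ h]

lemma mesymm_card (s : Multiset ℝ) : s.esymm (Multiset.card s) = s.prod := by
  have h : s.powersetCard (Multiset.card s) = {s} := by
    have hcard : Multiset.card (s.powersetCard (Multiset.card s)) = 1 := by
      rw [Multiset.card_powersetCard, Nat.choose_self]
    obtain ⟨a, ha⟩ := Multiset.card_eq_one.mp hcard
    have hs : s ∈ s.powersetCard (Multiset.card s) :=
      Multiset.mem_powersetCard.mpr ⟨le_rfl, rfl⟩
    rw [ha] at hs ⊢
    rw [Multiset.mem_singleton.mp hs]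
  rw [Multiset.esymm, h]
  simp

lemma sq_sum_eq (s : Multiset ℝ) :
    s.sum ^ 2 = (s.map (fun x => x ^ 2)).sum + 2 * s.esymm 2 := by
  induction s using Multiset.induction with
  | empty => simp [mesymm_of_lt (by simp : Multiset.card (0 : Multiset ℝ) < 2)]
  | cons a s ih =>
    rw [Multiset.sum_cons, mesymm_cons, Multiset.map_cons, Multiset.sum_cons, mesymm_one]
    ring_nf
    nlinarith [ih]

lemma cs_sum (s : Multiset ℝ) :
    s.sum ^ 2 ≤ (Multiset.card s : ℝ) * (s.map (fun x => x ^ 2)).sum := by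
  induction s using Multiset.induction with
  | empty => simp
  | cons a s ih =>
    rw [Multiset.sum_cons, Multiset.map_cons, Multiset.sum_cons, Multiset.card_cons]
    push_cast
    have h2 : 2 * a * s.sum ≤ (s.map (fun x => x ^ 2)).sum + (Multiset.card s : ℝ) * a ^ 2 := by
      have : ∀ x ∈ s, 2 * a * x ≤ x ^ 2 + a ^ 2 := fun x _ => by nlinarith [sq_nonneg (x - a)]
      calc 2 * a * s.sum = (s.map (fun x => 2 * a * x)).sum := by
            rw [Multiset.sum_map_mul_left]; simp [Multiset.map_id']
        _ ≤ (s.map (fun x => x ^ 2 + a ^ 2)).sum := by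
            apply Multiset.sum_map_le_sum_map
            exact this
        _ = (s.map (fun x => x ^ 2)).sum + (Multiset.card s : ℝ) * a ^ 2 := by
            rw [Multiset.sum_map_add, Multiset.map_const', Multiset.sum_replicate]
            simp [nsmul_eq_mul]
    nlinarith [ih, (s.map (fun x => x ^ 2)).sum, sq_nonneg a]


/-- Normalized mean `H_k` of a multiset. -/
noncomputable def Hm (s : Multiset ℝ) (k : ℕ) : ℝ :=
  s.esymm k / ((Multiset.card s).choose k : ℝ)

lemma Hm_zero (s : Multiset ℝ) : Hm s 0 = 1 := by simp [Hm, mesymm_zero]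

lemma Hm_of_lt {s : Multiset ℝ} {k : ℕ} (h : Multiset.card s < k) : Hm s k = 0 := by
  simp [Hm, mesymm_of_lt h]

lemma choose_pos_real {n k : ℕ} (h : k ≤ n) : (0 : ℝ) < (n.choose k : ℝ) := by
  exact_mod_cast Nat.choose_pos h

/-- Newton's inequality in the base case `k = 1`. -/
lemma newton_one (s : Multiset ℝ) : Hm s 2 ≤ Hm s 1 ^ 2 := by
  rcases lt_or_ge (Multiset.card s) 2 with h | h
  · rw [Hm_of_lt h]; positivity
  · have key : ∀ m : ℕ, 2 * ((m+1).choose 2 : ℝ) = ((m+1) : ℝ) * (((m+1):ℝ) - 1) := by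
      intro m
      have h1 := Nat.add_one_mul_choose_eq m 1
      rw [Nat.choose_one_right] at h1
      norm_num at h1
      have h2 : 2 * ((m+1).choose 2) = (m+1) * m := by omega
      have h2R : ((2 * ((m+1).choose 2) : ℕ) : ℝ) = (((m+1) * m : ℕ) : ℝ) := by rw [h2]
      push_cast at h2R
      nlinarith [h2R]
    obtain ⟨m, hm⟩ : ∃ m, Multiset.card s = m + 1 := ⟨Multiset.card s - 1, by omega⟩
    have hn0 : (0:ℝ) < (Multiset.card s : ℝ) := by exact_mod_cast lt_of_lt_of_le (by norm_num) h
    have hC : (0:ℝ) < ((Multiset.card s).choose 2 : ℝ) := choose_pos_real h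
    have hch : 2 * ((Multiset.card s).choose 2 : ℝ) =
        (Multiset.card s : ℝ) * ((Multiset.card s : ℝ) - 1) := by rw [hm]; exact_mod_cast key m
    have hcs := cs_sum s
    have hsq := sq_sum_eq s
    rw [Hm, Hm, Nat.choose_one_right, mesymm_one, div_pow, div_le_div_iff₀ hC (by positivity)]
    nlinarith [mul_le_mul_of_nonneg_left hcs hn0.le, sq_nonneg s.sum]

/-- Reciprocal identity for elementary symmetric functions. -/
lemma mesymm_inv (s : Multiset ℝ) (h0 : ∀ x ∈ s, x ≠ 0) :
    ∀ k ≤ Multiset.card s,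
      ((s.map fun x => x⁻¹).esymm k) * s.prod = s.esymm (Multiset.card s - k) := by
  induction s using Multiset.induction with
  | empty =>
    intro k hk
    have hk0 : k = 0 := by simpa using hk
    subst hk0; simp [mesymm_zero]
  | cons a s ih =>
    intro k hk
    have ha : a ≠ 0 := h0 a (Multiset.mem_cons_self a s)
    have h0' : ∀ x ∈ s, x ≠ 0 := fun x hx => h0 x (Multiset.mem_cons_of_mem hx)
    rw [Multiset.card_cons] at hk ⊢
    rcases Nat.eq_zero_or_pos k with rfl | hkpos
    · rw [mesymm_zero, one_mul, Nat.sub_zero, ← Multiset.card_cons a s, mesymm_card]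
    obtain ⟨k, rfl⟩ : ∃ m, k = m + 1 := ⟨k - 1, by omega⟩
    have hk' : k ≤ Multiset.card s := by omega
    rw [Multiset.map_cons, mesymm_cons, Multiset.prod_cons, add_mul]
    have hterm2 : a⁻¹ * (s.map fun x => x⁻¹).esymm k * (a * s.prod)
        = s.esymm (Multiset.card s - k) := by
      rw [← ih h0' k hk']; field_simp
    rcases eq_or_lt_of_le hk' with heq | hlt
    · -- k = card s : top case
      have hz : (s.map fun x => x⁻¹).esymm (k + 1) = 0 :=
        mesymm_of_lt (by rw [Multiset.card_map, ← heq]; omega)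
      rw [hz, zero_mul, zero_add, hterm2, ← heq, Nat.sub_self, Nat.sub_self,
        mesymm_zero, mesymm_zero]
    · -- k < card s
      have hidx : Multiset.card s + 1 - (k + 1) = (Multiset.card s - k - 1) + 1 := by omega
      rw [hidx, mesymm_cons, hterm2]
      have hterm1 : (s.map fun x => x⁻¹).esymm (k + 1) * (a * s.prod)
          = a * s.esymm (Multiset.card s - (k + 1)) := by
        rw [← ih h0' (k+1) hlt]; ring
      rw [hterm1]
      have : Multiset.card s - (k + 1) = Multiset.card s - k - 1 := by omega
      rw [this]
      have : Multiset.card s - k = (Multiset.card s - k - 1) + 1 := by omega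
      rw [this]
      ring_nf
      congr 2
      omega


/-- Differentiation step: shrink a real multiset by one while preserving all `Hm`. -/
lemma derivative_step (s : Multiset ℝ) (n : ℕ) (hcard : Multiset.card s = n + 1) :
    ∃ t : Multiset ℝ, Multiset.card t = n ∧ ∀ j ≤ n, Hm t j = Hm s j := by
  set p : ℝ[X] := (s.map fun a => X - C a).prod with hp
  have hmonic : p.Monic := monic_multiset_prod_of_monic _ _ (fun a _ => monic_X_sub_C a)
  have hdeg : p.natDegree = n + 1 := by
    rw [hp, natDegree_multiset_prod_X_sub_C_eq_card, hcard]
  have hroots : p.roots = s := roots_multiset_prod_X_sub_C s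
  have hdcoeff : (derivative p).coeff n = (n + 1 : ℝ) := by
    rw [coeff_derivative]
    have h1 : p.coeff (n + 1) = 1 := by
      rw [← hdeg]; exact hmonic.coeff_natDegree
    rw [h1]; push_cast; ring
  have hdne : ((n : ℝ) + 1) ≠ 0 := by positivity
  have hdnat : (derivative p).natDegree = n := by
    refine natDegree_eq_of_le_of_coeff_ne_zero ?_ (by rw [hdcoeff]; exact_mod_cast hdne)
    have h2 := natDegree_derivative_le p
    rw [hdeg] at h2; simpa using h2
  have hlead : (derivative p).leadingCoeff = ((n : ℝ) + 1) := by
    rw [Polynomial.leadingCoeff, hdnat, hdcoeff]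
  have hcardroots : Multiset.card (derivative p).roots = n := by
    have h1 : Multiset.card (derivative p).roots ≤ n := hdnat ▸ card_roots' _
    have h2 := p.card_roots_le_derivative
    rw [hroots, hcard] at h2; omega
  set t := (derivative p).roots with hts
  have hfact : C ((n : ℝ) + 1) * (t.map fun a => X - C a).prod = derivative p := by
    have h3 := C_leadingCoeff_mul_prod_multiset_X_sub_C
      (p := derivative p) (hcardroots.trans hdnat.symm)
    rw [hlead] at h3; exact h3
  refine ⟨t, hcardroots, ?_⟩
  intro j hj
  have hcoeffs : (derivative p).coeff (n - j) = (((n : ℝ) + 1) - j) * ((-1 : ℝ) ^ j * s.esymm j) := by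
    rw [coeff_derivative]
    have hidx : (n - j) + 1 = (n + 1) - j := by omega
    have h4 : p.coeff ((n - j) + 1) = (-1 : ℝ) ^ j * s.esymm j := by
      rw [hidx, hp]
      have h5 := Multiset.prod_X_sub_C_coeff s (k := (n + 1) - j) (by rw [hcard]; omega)
      rw [hcard] at h5
      rw [h5]
      congr 2 <;> omega
    rw [h4]
    have : (((n - j : ℕ) : ℝ) + 1) = ((n : ℝ) + 1) - j := by
      have : ((n - j : ℕ) : ℝ) = (n : ℝ) - j := by
        push_cast [Nat.cast_sub hj]; ring
      rw [this]; ring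
    rw [this]; ring
  have hcoefft : (derivative p).coeff (n - j) = ((n : ℝ) + 1) * ((-1 : ℝ) ^ j * t.esymm j) := by
    rw [← hfact, coeff_C_mul]
    have h6 := Multiset.prod_X_sub_C_coeff t (k := n - j) (by rw [hcardroots]; omega)
    rw [hcardroots] at h6
    rw [h6]
    have : n - (n - j) = j := by omega
    rw [this]
  have hE : ((n : ℝ) + 1) * t.esymm j = (((n : ℝ) + 1) - j) * s.esymm j := by
    have h7 := hcoefft.symm.trans hcoeffs
    have hpow : ((-1 : ℝ) ^ j) ≠ 0 := by
      apply pow_ne_zero; norm_num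
    apply mul_left_cancel₀ hpow
    linear_combination h7
  -- now conclude Hm equality
  have hCn : (0 : ℝ) < (n.choose j : ℝ) := choose_pos_real hj
  have hCn1 : (0 : ℝ) < ((n+1).choose j : ℝ) := choose_pos_real (by omega)
  have hcc : (n.choose j : ℝ) * ((n : ℝ) + 1) = ((n+1).choose j : ℝ) * (((n : ℝ) + 1) - j) := by
    have h8 := Nat.choose_mul_succ_eq n j
    have h9 : ((n.choose j * (n + 1) : ℕ) : ℝ) = (((n + 1).choose j * (n + 1 - j) : ℕ) : ℝ) := by
      rw [h8]
    push_cast [Nat.cast_sub (by omega : j ≤ n + 1)] at h9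
    convert h9 using 2 <;> push_cast <;> ring
  have hne : (((n : ℝ) + 1) - j) ≠ 0 := by
    have : (j : ℝ) ≤ n := by exact_mod_cast hj
    linarith
  have key : (((n : ℝ) + 1) - j) * (t.esymm j * ((n+1).choose j : ℝ))
      = (((n : ℝ) + 1) - j) * (s.esymm j * (n.choose j : ℝ)) := by
    linear_combination (n.choose j : ℝ) * hE - t.esymm j * hcc
  have key2 := mul_left_cancel₀ hne key
  rw [Hm, Hm, hcardroots, hcard]
  rw [div_eq_div_iff (by positivity) (by positivity)]
  linarith [key2]

/-- Iterated reduction preserving `Hm`. -/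
lemma reduce : ∀ (d : ℕ) (s : Multiset ℝ) (m : ℕ), Multiset.card s = m + d →
    ∃ t : Multiset ℝ, Multiset.card t = m ∧ ∀ j ≤ m, Hm t j = Hm s j := by
  intro d
  induction d with
  | zero => intro s m h; exact ⟨s, by omega, fun j _ => rfl⟩
  | succ d ih =>
    intro s m h
    obtain ⟨u, hu, hH⟩ := derivative_step s (m + d) (by omega)
    obtain ⟨t, ht, hH'⟩ := ih u m hu
    exact ⟨t, ht, fun j hj => (hH' j hj).trans (hH j (by omega))⟩


lemma newton_top (s : Multiset ℝ) (j : ℕ) (hcard : Multiset.card s = j + 2) :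
    Hm s j * Hm s (j + 2) ≤ Hm s (j + 1) ^ 2 := by
  have hP : Hm s (j + 2) = s.prod := by
    rw [Hm, hcard, Nat.choose_self, ← hcard, mesymm_card]; simp
  rcases eq_or_ne s.prod 0 with hP0 | hP0
  · rw [hP, hP0, mul_zero]; positivity
  have h0 : ∀ x ∈ s, x ≠ 0 := by
    intro x hx hx0
    exact hP0 (Multiset.prod_eq_zero (hx0 ▸ hx))
  set ν : Multiset ℝ := s.map (fun x => x⁻¹) with hν
  have hcν : Multiset.card ν = j + 2 := by rw [hν, Multiset.card_map, hcard]
  have hinv1 : ν.esymm 1 * s.prod = s.esymm (j + 1) := by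
    have := mesymm_inv s h0 1 (by omega)
    rw [hcard] at this; simpa using this
  have hinv2 : ν.esymm 2 * s.prod = s.esymm j := by
    have := mesymm_inv s h0 2 (by omega)
    rw [hcard] at this; simpa using this
  have hn1 := newton_one ν
  have hc2 : ((j+2).choose (j+1)) = ((j+2).choose 1) := by
    have := Nat.choose_symm (n := j+2) (k := 1) (by omega)
    simpa using this.symm
  have hcj : ((j+2).choose j) = ((j+2).choose 2) := by
    have := Nat.choose_symm (n := j+2) (k := 2) (by omega)
    simpa using this
  have hC2 : (0:ℝ) < (((j+2).choose 2 : ℕ) : ℝ) := choose_pos_real (by omega)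
  have e1 : Hm ν 2 * s.prod ^ 2 = Hm s j * Hm s (j + 2) := by
    rw [Hm, Hm, hP, hcν, hcard, hcj]
    field_simp
    linear_combination hinv2
  have e2 : Hm ν 1 ^ 2 * s.prod ^ 2 = Hm s (j + 1) ^ 2 := by
    rw [Hm, Hm, hcν, hcard, hc2, Nat.choose_one_right]
    field_simp
    linear_combination (ν.esymm 1 * s.prod + s.esymm (j+1)) * hinv1
  calc Hm s j * Hm s (j + 2) = Hm ν 2 * s.prod ^ 2 := e1.symm
    _ ≤ Hm ν 1 ^ 2 * s.prod ^ 2 := by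
        apply mul_le_mul_of_nonneg_right hn1 (sq_nonneg _)
    _ = Hm s (j + 1) ^ 2 := e2

/-- Newton's inequality for arbitrary real multisets. -/
lemma newton (s : Multiset ℝ) (j : ℕ) (h : j + 2 ≤ Multiset.card s) :
    Hm s j * Hm s (j + 2) ≤ Hm s (j + 1) ^ 2 := by
  obtain ⟨t, ht, hH⟩ := reduce (Multiset.card s - (j + 2)) s (j + 2) (by omega)
  rw [← hH j (by omega), ← hH (j + 1) (by omega), ← hH (j + 2) le_rfl]
  exact newton_top t j ht

lemma all_zero_of_nonneg_sum_zero {s : Multiset ℝ} (h : ∀ x ∈ s, 0 ≤ x) (hs : s.sum = 0) :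
    ∀ x ∈ s, x = 0 := by
  induction s using Multiset.induction with
  | empty => simp
  | cons a t ih =>
    rw [Multiset.sum_cons] at hs
    have hts : (0:ℝ) ≤ t.sum := Multiset.sum_nonneg (fun x hx => h x (Multiset.mem_cons_of_mem hx))
    have ha : (0:ℝ) ≤ a := h a (Multiset.mem_cons_self a t)
    have ha0 : a = 0 := by linarith
    have ht0 : t.sum = 0 := by linarith
    intro x hx
    rcases Multiset.mem_cons.mp hx with rfl | hx
    · exact ha0
    · exact ih (fun y hy => h y (Multiset.mem_cons_of_mem hy)) ht0 x hx

/-- Two consecutive vanishing `Hm`'s force the next one to vanish. -/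
lemma two_zero (s : Multiset ℝ) (j : ℕ) (h : j + 2 ≤ Multiset.card s)
    (h1 : Hm s j = 0) (h2 : Hm s (j + 1) = 0) : Hm s (j + 2) = 0 := by
  obtain ⟨t, ht, hH⟩ := reduce (Multiset.card s - (j + 2)) s (j + 2) (by omega)
  rw [← hH j (by omega)] at h1
  rw [← hH (j + 1) (by omega)] at h2
  rw [← hH (j + 2) le_rfl]
  have hEj : t.esymm j = 0 := by
    rw [Hm, ht] at h1
    have := choose_pos_real (n := j + 2) (k := j) (by omega)
    field_simp at h1
    simpa using h1
  have hEj1 : t.esymm (j + 1) = 0 := by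
    rw [Hm, ht] at h2
    have := choose_pos_real (n := j + 2) (k := j + 1) (by omega)
    field_simp at h2
    simpa using h2
  suffices hprod : t.prod = 0 by
    rw [Hm, ht, ← ht, mesymm_card, hprod, zero_div]
  by_contra hprod
  have h0 : ∀ x ∈ t, x ≠ 0 := by
    intro x hx hx0
    exact hprod (Multiset.prod_eq_zero (hx0 ▸ hx))
  set ν : Multiset ℝ := t.map (fun x => x⁻¹) with hν
  have hinv1 : ν.esymm 1 * t.prod = t.esymm (j + 1) := by
    have := mesymm_inv t h0 1 (by omega)
    rw [ht] at this; simpa using this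
  have hinv2 : ν.esymm 2 * t.prod = t.esymm j := by
    have := mesymm_inv t h0 2 (by omega)
    rw [ht] at this; simpa using this
  have hν1 : ν.esymm 1 = 0 := by
    rw [hEj1] at hinv1
    exact (mul_eq_zero.mp hinv1).resolve_right hprod
  have hν2 : ν.esymm 2 = 0 := by
    rw [hEj] at hinv2
    exact (mul_eq_zero.mp hinv2).resolve_right hprod
  have hsum : ν.sum = 0 := by rw [← mesymm_one]; exact hν1
  have hsq := sq_sum_eq ν
  rw [hsum, hν2] at hsq
  have hsq0 : (ν.map (fun x => x ^ 2)).sum = 0 := by linarith [hsq]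
  have hall := all_zero_of_nonneg_sum_zero (s := ν.map (fun x => x ^ 2))
    (by intro x hx
        obtain ⟨y, _, rfl⟩ := Multiset.mem_map.mp hx
        positivity) hsq0
  obtain ⟨a, hat⟩ := Multiset.card_pos_iff_exists_mem.mp (by omega : 0 < Multiset.card t)
  have hmem : (a⁻¹) ^ 2 ∈ ν.map (fun x => x ^ 2) := by
    apply Multiset.mem_map_of_mem
    exact Multiset.mem_map_of_mem _ hat
  have := hall _ hmem
  have hainv : a⁻¹ = 0 := by
    exact pow_eq_zero_iff (by norm_num) |>.mp this
  exact h0 a hat (inv_eq_zero.mp hainv)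


lemma esymm_eq_mesymm (n k : ℕ) (l : Fin n → ℝ) :
    esymm n k l = (Multiset.map l Finset.univ.val).esymm k := by
  rw [Finset.esymm_map_val]; rfl

lemma meanH_eq_Hm (n k : ℕ) (l : Fin n → ℝ) :
    meanH n k l = Hm (Multiset.map l Finset.univ.val) k := by
  rw [meanH, Hm, esymm_eq_mesymm]
  congr 3
  simp

lemma newton_meanH (n j : ℕ) (h : j + 2 ≤ n) (l : Fin n → ℝ) :
    meanH n j l * meanH n (j + 2) l ≤ meanH n (j + 1) l ^ 2 := by
  rw [meanH_eq_Hm, meanH_eq_Hm, meanH_eq_Hm]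
  exact newton _ j (by simpa using h)

lemma two_zero_meanH (n j : ℕ) (h : j + 2 ≤ n) (l : Fin n → ℝ)
    (h1 : meanH n j l = 0) (h2 : meanH n (j + 1) l = 0) : meanH n (j + 2) l = 0 := by
  rw [meanH_eq_Hm] at h1 h2 ⊢
  exact two_zero _ j (by simpa using h) h1 h2

lemma meanH_zero' (n : ℕ) (l : Fin n → ℝ) : meanH n 0 l = 1 := by
  rw [meanH, esymm_eq_mesymm, mesymm_zero]
  simp

lemma meanH_pos_iff {n k : ℕ} (h : k ≤ n) (l : Fin n → ℝ) :
    0 < meanH n k l ↔ 0 < esymm n k l := by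
  rw [meanH, div_pos_iff]
  have := choose_pos_real h
  constructor
  · rintro (⟨h1, _⟩ | ⟨_, h2⟩)
    · exact h1
    · linarith
  · intro h1; exact Or.inl ⟨h1, this⟩

lemma meanH_eq_zero_iff {n k : ℕ} (h : k ≤ n) (l : Fin n → ℝ) :
    meanH n k l = 0 ↔ esymm n k l = 0 := by
  rw [meanH, _root_.div_eq_zero_iff]
  have := choose_pos_real h
  constructor
  · rintro (h1 | h1)
    · exact h1
    · linarith
  · exact Or.inl

lemma meanH_nonpos_iff {n k : ℕ} (h : k ≤ n) (l : Fin n → ℝ) :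
    meanH n k l ≤ 0 ↔ esymm n k l ≤ 0 := by
  rw [meanH, div_nonpos_iff]
  have := choose_pos_real h
  constructor
  · rintro (⟨_, h2⟩ | ⟨h1, _⟩)
    · linarith
    · exact h1
  · intro h1; exact Or.inr ⟨h1, this.le⟩

lemma continuous_esymm (n k : ℕ) : Continuous (esymm n k) := by
  apply continuous_finset_sum
  intro s _
  apply continuous_finset_prod
  intro i _
  exact continuous_apply i

lemma esymm_def (n k : ℕ) (l : Fin n → ℝ) :
    esymm n k l = ∑ s ∈ Finset.powersetCard k (Finset.univ : Finset (Fin n)), ∏ i ∈ s, l i := rfl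

lemma esymm_ones (n k : ℕ) : esymm n k (fun _ => 1) = (n.choose k : ℝ) := by
  rw [esymm_def]
  simp [Finset.card_powersetCard]

/-- On the Gårding cone all lower elementary symmetric functions are positive. -/
lemma cone_pos (n r : ℕ) (hn : 2 ≤ n) (hr1 : 1 ≤ r) (hrn : r ≤ n - 1)
    (l : Fin n → ℝ) (hl : l ∈ gardingCone n r) :
    ∀ k, 1 ≤ k → k ≤ r → 0 < esymm n k l := by
  classical
  have hrn' : r + 1 ≤ n := by omega
  set U := {l : Fin n → ℝ | 0 < esymm n r l} with hU
  set V := {l : Fin n → ℝ | ∀ k, 1 ≤ k → k ≤ r → 0 < esymm n k l} with hV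
  set W := {l : Fin n → ℝ | ∃ k, 1 ≤ k ∧ k < r ∧ esymm n k l < 0} with hW
  have hVopen : IsOpen V := by
    have hVeq : V = ⋂ k ∈ Finset.Icc 1 r, {l : Fin n → ℝ | 0 < esymm n k l} := by
      ext m
      simp only [hV, Set.mem_setOf_eq, Set.mem_iInter, Finset.mem_Icc]
      exact ⟨fun h k hk => h k hk.1 hk.2, fun h k h1 h2 => h k ⟨h1, h2⟩⟩
    rw [hVeq]
    exact isOpen_biInter_finset fun k _ => isOpen_lt continuous_const (continuous_esymm n k)
  have hWopen : IsOpen W := by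
    have hWeq : W = ⋃ k ∈ Finset.Ico 1 r, {l : Fin n → ℝ | esymm n k l < 0} := by
      ext m
      simp only [hW, Set.mem_setOf_eq, Set.mem_iUnion, Finset.mem_Ico]
      exact ⟨fun ⟨k, h1, h2, h3⟩ => ⟨k, ⟨h1, h2⟩, h3⟩, fun ⟨k, ⟨h1, h2⟩, h3⟩ => ⟨k, h1, h2, h3⟩⟩
    rw [hWeq]
    exact isOpen_biUnion fun k _ => isOpen_lt (continuous_esymm n k) continuous_const
  have hdisj : Disjoint V W := by
    rw [Set.disjoint_left]
    rintro m hmV ⟨k, hk1, hkr, hneg⟩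
    exact absurd (hmV k hk1 hkr.le) (by linarith)
  have hcover : U ⊆ V ∪ W := by
    intro m hm
    by_cases hmW : m ∈ W
    · exact Or.inr hmW
    left
    have hnonneg : ∀ k, 1 ≤ k → k < r → 0 ≤ esymm n k m := by
      intro k hk1 hkr
      by_contra hneg
      exact hmW ⟨k, hk1, hkr, by linarith⟩
    intro k hk1 hkr
    by_contra hpos
    push_neg at hpos
    have hex : ∃ k, 1 ≤ k ∧ k ≤ r ∧ esymm n k m ≤ 0 := ⟨k, hk1, hkr, hpos⟩
    obtain ⟨k0, hk01, hk0r, hk0le, hmin⟩ :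
        ∃ k0, 1 ≤ k0 ∧ k0 ≤ r ∧ esymm n k0 m ≤ 0 ∧
          ∀ j < k0, ¬(1 ≤ j ∧ j ≤ r ∧ esymm n j m ≤ 0) :=
      ⟨Nat.find hex, (Nat.find_spec hex).1, (Nat.find_spec hex).2.1, (Nat.find_spec hex).2.2,
        fun j hj => Nat.find_min hex hj⟩
    have hmU : 0 < esymm n r m := hm
    have hk0lt : k0 < r := by
      rcases eq_or_lt_of_le hk0r with heq | hlt
      · exfalso
        have : esymm n r m ≤ 0 := by rw [← heq]; exact hk0le
        linarith
      · exact hlt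
    have hk0zero : esymm n k0 m = 0 := le_antisymm hk0le (hnonneg k0 hk01 hk0lt)
    have hprev : 0 < meanH n (k0 - 1) m := by
      rcases eq_or_lt_of_le hk01 with heq | hlt
      · rw [← heq]; norm_num [meanH_zero']
      · have h1lek : 1 ≤ k0 - 1 := by omega
        have hlt' : k0 - 1 < k0 := by omega
        have := hmin (k0 - 1) hlt'
        push_neg at this
        have hpos' : 0 < esymm n (k0 - 1) m := this h1lek (by omega)
        exact (meanH_pos_iff (by omega) m).mpr hpos'
    have hk0n : k0 + 1 ≤ n := by omega
    have hnewton := newton_meanH n (k0 - 1) (by omega) m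
    have hidx1 : k0 - 1 + 1 = k0 := by omega
    have hidx2 : k0 - 1 + 2 = k0 + 1 := by omega
    rw [hidx1, hidx2] at hnewton
    have hmeank0 : meanH n k0 m = 0 := (meanH_eq_zero_iff (by omega) m).mpr hk0zero
    rw [hmeank0] at hnewton
    have hnext : meanH n (k0 + 1) m ≤ 0 := by
      nlinarith [hnewton, hprev]
    rcases eq_or_lt_of_le (by omega : k0 + 1 ≤ r) with heq | hlt
    · have : esymm n r m ≤ 0 := by
        rw [← heq]
        exact (meanH_nonpos_iff (by omega) m).mp hnext
      linarith
    · -- k0 + 1 < r, so esymm (k0+1) ≥ 0 hence = 0; propagate zeros to r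
      have hnext0 : meanH n (k0 + 1) m = 0 := by
        have := hnonneg (k0 + 1) (by omega) hlt
        have h2 := (meanH_nonpos_iff (by omega) m).mp hnext
        have := (meanH_eq_zero_iff (by omega) m).mpr (le_antisymm h2 this)
        exact this
      have hzero : ∀ d, k0 + d ≤ r → meanH n (k0 + d) m = 0 := by
        intro d
        induction d using Nat.strong_induction_on with
        | _ d ih =>
          intro hd
          match d with
          | 0 => exact hmeank0
          | 1 => exact hnext0
          | (e + 2) =>
            have hz1 := ih e (by omega) (by omega)
            have hz2 := ih (e + 1) (by omega) (by omega)
            have heq2 : k0 + (e + 2) = (k0 + e) + 2 := by omega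
            have heq1 : k0 + (e + 1) = (k0 + e) + 1 := by omega
            rw [heq2]
            rw [heq1] at hz2
            exact two_zero_meanH n (k0 + e) (by omega) m hz1 hz2
      have := hzero (r - k0) (by omega)
      rw [show k0 + (r - k0) = r by omega] at this
      have := (meanH_eq_zero_iff (by omega) m).mp this
      linarith
  have h1U : (fun _ => (1:ℝ) : Fin n → ℝ) ∈ U := by
    rw [hU, Set.mem_setOf_eq, esymm_ones]
    exact choose_pos_real (by omega)
  have h1V : (fun _ => (1:ℝ) : Fin n → ℝ) ∈ V := by
    intro k hk1 hkr
    rw [esymm_ones]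
    exact choose_pos_real (by omega)
  have hCsub : gardingCone n r ⊆ U := connectedComponentIn_subset _ _
  have hone : (fun _ => (1:ℝ) : Fin n → ℝ) ∈ gardingCone n r := mem_connectedComponentIn h1U
  have hpre : IsPreconnected (gardingCone n r) := isPreconnected_connectedComponentIn
  have hsub : gardingCone n r ⊆ V :=
    hpre.subset_left_of_subset_union hVopen hWopen hdisj
      (hCsub.trans hcover) ⟨(fun _ => (1:ℝ)), hone, h1V⟩
  exact hsub hl

end MeanHAux

open MeanHAux in
/-- For `n ≥ 2`, `1 ≤ r ≤ n-1` and `λ ∈ Γ_r` one has `H₁(λ)·H_r(λ) ≥ H_{r+1}(λ)`. -/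
theorem meanH_mul_ge (n r : ℕ) (hn : 2 ≤ n) (hr1 : 1 ≤ r) (hr : r ≤ n - 1)
    (l : Fin n → ℝ) (hl : l ∈ gardingCone n r) :
    meanH n (r + 1) l ≤ meanH n 1 l * meanH n r l := by
  have hpos := cone_pos n r hn hr1 hr l hl
  have hposH : ∀ k, 1 ≤ k → k ≤ r → 0 < meanH n k l := by
    intro k hk1 hkr
    exact (meanH_pos_iff (by omega) l).mpr (hpos k hk1 hkr)
  have hchain : ∀ k, 1 ≤ k → k ≤ r → meanH n (k + 1) l ≤ meanH n 1 l * meanH n k l := by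
    intro k
    induction k with
    | zero => omega
    | succ k ih =>
      intro _ hkr
      rcases Nat.eq_zero_or_pos k with rfl | hk
      · have hnewton := newton_meanH n 0 (by omega) l
        rw [meanH_zero'] at hnewton
        nlinarith [hnewton]
      · have ihk := ih (by omega) (by omega)
        have hnewton := newton_meanH n k (by omega) l
        have hA : 0 < meanH n k l := hposH k (by omega) (by omega)
        have hB : 0 < meanH n (k + 1) l := hposH (k + 1) (by omega) hkr
        nlinarith [hnewton, ihk, hA, hB, mul_le_mul_of_nonneg_left ihk hB.le]
  exact hchain r hr1 le_rfl
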